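/- Fix N ≥ 1, assume that {p'_N(w_1), …, p'_N(w_N)} is a basis of H'_N, and let M_N be the N×N complex matrix with entries (M_N)_{j,k} = ⟨w_j, v_k⟩ for 1 ≤ j, k ≤ N. Then the optimal frame constants Ã_N ≤ B̃_N of B̃_N satisfy Ã_N = min_{c ∈ ℂ^N, |c| = 1} ‖M_N c‖² (the square of the smallest singular value of M_N) and B̃_N = max{ 1, max_{c ∈ ℂ^N, |c| = 1} ‖M_N c‖² } (the maximum of 1 and the square of the largest singular value of M_N). -/

import Mathlib

open scoped BigOperators ComplexConjugate
open Submodule Filter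

noncomputable section

local notation "⟪" x ", " y "⟫" => @inner ℂ _ _ x y

variable {H : Type*} [NormedAddCommGroup H] [InnerProductSpace ℂ H] [CompleteSpace H]

/-- `u` is a frame of `H` with frame bounds `A ≤ B`. -/
def IsFrame (u : ℕ → H) (A B : ℝ) : Prop :=
  0 < A ∧ A ≤ B ∧ ∀ f : H,
    Summable (fun j => ‖⟪f, u j⟫‖ ^ 2) ∧
    A * ‖f‖ ^ 2 ≤ (∑' j, ‖⟪f, u j⟫‖ ^ 2) ∧ (∑' j, ‖⟪f, u j⟫‖ ^ 2) ≤ B * ‖f‖ ^ 2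

/-- `u` is a Riesz sequence in `H` with bounds `A ≤ B`. -/
def IsRieszSeq (u : ℕ → H) (A B : ℝ) : Prop :=
  0 < A ∧ A ≤ B ∧ ∀ (s : Finset ℕ) (c : ℕ → ℂ),
    A * ∑ j ∈ s, ‖c j‖ ^ 2 ≤ ‖∑ j ∈ s, c j • u j‖ ^ 2 ∧
    ‖∑ j ∈ s, c j • u j‖ ^ 2 ≤ B * ∑ j ∈ s, ‖c j‖ ^ 2

/-- A Riesz basis of `H` with frame constants `A ≤ B` is simultaneously a frame and a
Riesz sequence with those bounds. -/
def IsRieszBasis (u : ℕ → H) (A B : ℝ) : Prop := IsFrame u A B ∧ IsRieszSeq u A B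

/-- Optimal frame constants of a Riesz basis: the largest `A` and the smallest `B`. -/
def OptimalRieszConstants (u : ℕ → H) (A B : ℝ) : Prop :=
  IsRieszBasis u A B ∧ ∀ A' B' : ℝ, IsRieszBasis u A' B' → A' ≤ A ∧ B ≤ B'

/-- Optimal frame bounds of a frame: the largest `A` and the smallest `B`. -/
def OptimalFrameBounds (u : ℕ → H) (A B : ℝ) : Prop :=
  IsFrame u A B ∧ ∀ A' B' : ℝ, IsFrame u A' B' → A' ≤ A ∧ B ≤ B'

/-- The sequence `B_N`: the first `N` vectors of `v` are replaced by those of `w`. -/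
def BNseq (w v : ℕ → H) (N : ℕ) : ℕ → H := fun j => if j < N then w j else v j

/-- The orthogonal projection `p'_N` onto `H'_N = span {v_0, …, v_{N-1}}`
(for an orthonormal family `v`). -/
def pproj (v : ℕ → H) (N : ℕ) (u : H) : H := ∑ j ∈ Finset.range N, ⟪v j, u⟫ • v j

/-- The sequence `B̃_N`: the projections `p'_N (w_j)` for `j < N`, followed by the `v_j`. -/
def BtNseq (w v : ℕ → H) (N : ℕ) : ℕ → H := fun j => if j < N then pproj v N (w j) else v j

/-- The `N × N` matrix `U'_N` with (paper-convention) entries `⟨p'_N w_i, p'_N w_j⟩`;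
here stated with Mathlib's inner product, conjugate-linear in the first slot. -/
def Umat' (v w : ℕ → H) (N : ℕ) : Matrix (Fin N) (Fin N) ℂ :=
  Matrix.of fun i j => ⟪pproj v N (w (j : ℕ)), pproj v N (w (i : ℕ))⟫

/-- The `N × N` matrix `U''_N` with (paper-convention) entries `⟨p''_N w_i, p''_N w_j⟩`,
where `p''_N u = u - p'_N u`. -/
def Umat'' (v w : ℕ → H) (N : ℕ) : Matrix (Fin N) (Fin N) ℂ :=
  Matrix.of fun i j =>
    ⟪w (j : ℕ) - pproj v N (w (j : ℕ)), w (i : ℕ) - pproj v N (w (i : ℕ))⟫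

/-- The quadratic form `⟨U c, c⟩ = ∑_{i,j} U_{i,j} c_i conj (c_j)` (real part). -/
def quadForm {N : ℕ} (U : Matrix (Fin N) (Fin N) ℂ) (c : Fin N → ℂ) : ℝ :=
  (∑ i, ∑ j, U i j * c i * conj (c j)).re

/-- The matrix `M_N` with (paper-convention) entries `⟨w_j, v_k⟩`. -/
def Mmat (v w : ℕ → H) (N : ℕ) : Matrix (Fin N) (Fin N) ℂ :=
  Matrix.of fun j k => ⟪v (k : ℕ), w (j : ℕ)⟫

/-- The quantity `∑_{j ≤ N} |⟨f, w_j⟩|² + ∑_{j > N} |⟨f, v_j⟩|²`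
(the squared norm of the analysis operator of `B_N` applied to `f`). -/
def frameFun (v w : ℕ → H) (N : ℕ) (f : H) : ℝ :=
  (∑ j ∈ Finset.range N, ‖⟪f, w j⟫‖ ^ 2) + ∑' j : {j : ℕ // N ≤ j}, ‖⟪f, v (j : ℕ)⟫‖ ^ 2

/-- The quantity `∑_{j ≤ N} |⟨f, p'_N w_j⟩|² + ∑_{j > N} |⟨f, v_j⟩|²`
(the squared norm of the analysis operator of `B̃_N` applied to `f`). -/
def frameFunT (v w : ℕ → H) (N : ℕ) (f : H) : ℝ :=
  (∑ j ∈ Finset.range N, ‖⟪f, pproj v N (w j)⟫‖ ^ 2) +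
    ∑' j : {j : ℕ // N ≤ j}, ‖⟪f, v (j : ℕ)⟫‖ ^ 2

namespace Stmt10Aux
open Matrix


abbrev Euc (N : ℕ) := EuclideanSpace ℂ (Fin N)

variable {N : ℕ}

def sqSet (X : Euc N →L[ℂ] Euc N) : Set ℝ := {x : ℝ | ∃ c : Euc N, ‖c‖ = 1 ∧ x = ‖X c‖ ^ 2}

lemma sphere_compact : IsCompact {c : Euc N | ‖c‖ = 1} := by
  have : {c : Euc N | ‖c‖ = 1} = Metric.sphere 0 1 := by
    ext c; simp [mem_sphere_zero_iff_norm]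
  rw [this]; exact isCompact_sphere 0 1

lemma sphere_nonempty (hN : 1 ≤ N) : ∃ c : Euc N, ‖c‖ = 1 := by
  refine ⟨EuclideanSpace.single ⟨0, hN⟩ (1 : ℂ), ?_⟩
  simp [EuclideanSpace.norm_single]

lemma norm_inv_smul_eq_one {c : Euc N} (hc : c ≠ 0) :
    ‖((‖c‖⁻¹ : ℝ) : ℂ) • c‖ = 1 := by
  have hcpos : (0:ℝ) < ‖c‖ := norm_pos_iff.2 hc
  rw [norm_smul]
  simp only [Complex.norm_real, Real.norm_eq_abs, abs_inv, abs_norm]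
  exact inv_mul_cancel₀ hcpos.ne'

lemma sqSet_isGreatest (hN : 1 ≤ N) (X : Euc N →L[ℂ] Euc N) :
    IsGreatest (sqSet X) (‖X‖ ^ 2) := by
  obtain ⟨c₁, hc₁⟩ := sphere_nonempty (N := N) hN
  obtain ⟨c₀, hc₀s, hmax⟩ := sphere_compact.exists_isMaxOn ⟨c₁, hc₁⟩
    ((continuous_norm.comp X.continuous).continuousOn (s := {c : Euc N | ‖c‖ = 1}))
  have hc₀ : ‖c₀‖ = 1 := hc₀s
  have hXc₀ : ‖X c₀‖ = ‖X‖ := by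
    refine le_antisymm ?_ ?_
    · have := X.le_opNorm c₀
      rwa [hc₀, mul_one] at this
    · refine X.opNorm_le_bound (norm_nonneg _) fun x => ?_
      rcases eq_or_ne x 0 with rfl | hx
      · simp
      · have hxpos : (0:ℝ) < ‖x‖ := norm_pos_iff.2 hx
        have hxs : ‖((‖x‖⁻¹ : ℝ) : ℂ) • x‖ = 1 := norm_inv_smul_eq_one hx
        have h2 : ‖X (((‖x‖⁻¹ : ℝ) : ℂ) • x)‖ ≤ ‖X c₀‖ := hmax hxs
        rw [_root_.map_smul, norm_smul] at h2
        simp only [Complex.norm_real, Real.norm_eq_abs, abs_inv, abs_norm] at h2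
        calc ‖X x‖ = ‖x‖ * (‖x‖⁻¹ * ‖X x‖) := by field_simp
        _ ≤ ‖x‖ * ‖X c₀‖ := mul_le_mul_of_nonneg_left h2 hxpos.le
        _ = ‖X c₀‖ * ‖x‖ := mul_comm _ _
  constructor
  · exact ⟨c₀, hc₀, by rw [hXc₀]⟩
  · rintro x ⟨c, hc, rfl⟩
    have h1 : ‖X c‖ ≤ ‖X‖ := by
      have := X.le_opNorm c; rwa [hc, mul_one] at this
    exact pow_le_pow_left₀ (norm_nonneg _) h1 2

lemma sqSet_isLeast (hN : 1 ≤ N) (X Y : Euc N →L[ℂ] Euc N)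
    (hXY : ∀ z, X (Y z) = z) (hYX : ∀ z, Y (X z) = z) :
    IsLeast (sqSet X) ((‖Y‖ ^ 2)⁻¹) := by
  obtain ⟨c₁, hc₁⟩ := sphere_nonempty (N := N) hN
  have hYpos : (0:ℝ) < ‖Y‖ := by
    rcases (norm_nonneg Y).lt_or_eq with h | h
    · exact h
    · exfalso
      have h1 : ‖Y (X c₁)‖ ≤ ‖Y‖ * ‖X c₁‖ := Y.le_opNorm _
      rw [hYX, hc₁, ← h, zero_mul] at h1
      linarith
  constructor
  · obtain ⟨d, hd, hval⟩ := (sqSet_isGreatest hN Y).1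
    have hYd : ‖Y d‖ = ‖Y‖ := by
      have h2 : ‖Y d‖ ^ 2 = ‖Y‖ ^ 2 := hval.symm
      nlinarith [norm_nonneg (Y d), norm_nonneg Y]
    have hYdne : Y d ≠ 0 := by
      intro h0; rw [h0, norm_zero] at hYd; exact hYpos.ne hYd
    refine ⟨((‖Y d‖⁻¹ : ℝ) : ℂ) • Y d, norm_inv_smul_eq_one hYdne, ?_⟩
    rw [_root_.map_smul, hXY, norm_smul]
    simp only [Complex.norm_real, Real.norm_eq_abs, abs_inv, abs_norm]
    rw [hd, mul_one, hYd, ← inv_pow]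
  · rintro x ⟨c, hc, rfl⟩
    have h1 : (1:ℝ) ≤ ‖Y‖ * ‖X c‖ := by
      calc (1:ℝ) = ‖c‖ := hc.symm
      _ = ‖Y (X c)‖ := by rw [hYX]
      _ ≤ ‖Y‖ * ‖X c‖ := Y.le_opNorm _
    have hXcpos : (0:ℝ) ≤ ‖X c‖ := norm_nonneg _
    rw [inv_le_iff_one_le_mul₀ (by positivity)]
    calc (1:ℝ) = 1 * 1 := by ring
    _ ≤ (‖Y‖ * ‖X c‖) * (‖Y‖ * ‖X c‖) := mul_le_mul h1 h1 zero_le_one (by positivity)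
    _ = ‖Y‖ ^ 2 * ‖X c‖ ^ 2 := by ring
    _ = ‖X c‖ ^ 2 * ‖Y‖ ^ 2 := by ring

lemma isLeast_homog {X : Euc N →L[ℂ] Euc N} {A : ℝ} (h : IsLeast (sqSet X) A) (c : Euc N) :
    A * ‖c‖ ^ 2 ≤ ‖X c‖ ^ 2 := by
  rcases eq_or_ne c 0 with rfl | hc
  · simp
  · have hcpos : (0:ℝ) < ‖c‖ := norm_pos_iff.2 hc
    have hmem : ‖X (((‖c‖⁻¹ : ℝ) : ℂ) • c)‖ ^ 2 ∈ sqSet X :=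
      ⟨_, norm_inv_smul_eq_one hc, rfl⟩
    have h2 := h.2 hmem
    rw [_root_.map_smul, norm_smul] at h2
    simp only [Complex.norm_real, Real.norm_eq_abs, abs_inv, abs_norm] at h2
    rw [mul_pow, inv_pow] at h2
    calc A * ‖c‖ ^ 2 ≤ ((‖c‖ ^ 2)⁻¹ * ‖X c‖ ^ 2) * ‖c‖ ^ 2 :=
      mul_le_mul_of_nonneg_right h2 (by positivity)
    _ = ‖X c‖ ^ 2 := by field_simp

lemma isGreatest_homog {X : Euc N →L[ℂ] Euc N} {B : ℝ} (h : IsGreatest (sqSet X) B) (c : Euc N) :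
    ‖X c‖ ^ 2 ≤ B * ‖c‖ ^ 2 := by
  rcases eq_or_ne c 0 with rfl | hc
  · simp
  · have hcpos : (0:ℝ) < ‖c‖ := norm_pos_iff.2 hc
    have hmem : ‖X (((‖c‖⁻¹ : ℝ) : ℂ) • c)‖ ^ 2 ∈ sqSet X :=
      ⟨_, norm_inv_smul_eq_one hc, rfl⟩
    have h2 := h.2 hmem
    rw [_root_.map_smul, norm_smul] at h2
    simp only [Complex.norm_real, Real.norm_eq_abs, abs_inv, abs_norm] at h2
    rw [mul_pow, inv_pow] at h2
    calc ‖X c‖ ^ 2 = ((‖c‖ ^ 2)⁻¹ * ‖X c‖ ^ 2) * ‖c‖ ^ 2 := by field_simp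
    _ ≤ B * ‖c‖ ^ 2 := mul_le_mul_of_nonneg_right h2 (by positivity)

def matCLM (M : Matrix (Fin N) (Fin N) ℂ) : Euc N →L[ℂ] Euc N :=
  LinearMap.toContinuousLinearMap
    { toFun := fun c => (WithLp.toLp 2 (M.mulVec c) : Euc N)
      map_add' := fun x y => by simp [Matrix.mulVec_add]
      map_smul' := fun r x => by simp [Matrix.mulVec_smul] }

@[simp] lemma matCLM_apply (M : Matrix (Fin N) (Fin N) ℂ) (c : Euc N) :
    matCLM M c = M.mulVec c := rfl

lemma euc_norm_sq (x : Euc N) : ‖x‖ ^ 2 = ∑ i, ‖x i‖ ^ 2 := by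
  rw [EuclideanSpace.norm_eq, Real.sq_sqrt]
  positivity

lemma matCLM_adjoint (M : Matrix (Fin N) (Fin N) ℂ) :
    matCLM Mᴴ = ContinuousLinearMap.adjoint (matCLM M) := by
  rw [ContinuousLinearMap.eq_adjoint_iff]
  intro x y
  simp only [matCLM_apply, PiLp.inner_apply, RCLike.inner_apply, Matrix.mulVec,
    dotProduct, Matrix.conjTranspose_apply, map_sum, _root_.map_mul,
    Finset.mul_sum, Finset.sum_mul]
  rw [Finset.sum_comm]
  apply Finset.sum_congr rfl; intro j _
  apply Finset.sum_congr rfl; intro k _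
  simp only [_root_.map_mul, starRingEnd_apply, star_star]
  ring

lemma matCLM_comp_eq_id {M M' : Matrix (Fin N) (Fin N) ℂ} (h : M * M' = 1) :
    ∀ z : Euc N, matCLM M (matCLM M' z) = z := by
  intro z
  ext i
  simp only [matCLM_apply]
  rw [Matrix.mulVec_mulVec, h, Matrix.one_mulVec]

lemma norm_matCLM_adjoint (M : Matrix (Fin N) (Fin N) ℂ) : ‖matCLM Mᴴ‖ = ‖matCLM M‖ := by
  rw [matCLM_adjoint]
  exact ContinuousLinearMap.adjoint.norm_map (matCLM M)

def conjVec (d : Euc N) : Euc N := (WithLp.equiv 2 _).symm (fun j : Fin N => conj (d j))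

@[simp] lemma conjVec_apply (d : Euc N) (j : Fin N) : conjVec d j = conj (d j) := rfl

@[simp] lemma conjVec_conjVec (d : Euc N) : conjVec (conjVec d) = d := by
  ext j; simp

lemma norm_conjVec (d : Euc N) : ‖conjVec d‖ = ‖d‖ := by
  rw [EuclideanSpace.norm_eq, EuclideanSpace.norm_eq]
  congr 1
  apply Finset.sum_congr rfl
  intro j _
  rw [conjVec_apply, RCLike.norm_conj]


variable {N : ℕ} (v w : ℕ → H)

lemma pproj_eq_sum_fin (u : H) :
    pproj v N u = ∑ k : Fin N, ⟪v (k : ℕ), u⟫ • v (k : ℕ) :=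
  (Fin.sum_univ_eq_sum_range (fun k => ⟪v k, u⟫ • v k) N).symm

lemma on_norm_sum {ι : Type*} {e : ι → H} (he : Orthonormal ℂ e) (s : Finset ι) (l : ι → ℂ) :
    ‖∑ i ∈ s, l i • e i‖ ^ 2 = ∑ i ∈ s, ‖l i‖ ^ 2 := by
  have h := he.inner_sum l l s
  have h2 : RCLike.re ⟪∑ i ∈ s, l i • e i, ∑ i ∈ s, l i • e i⟫ = ‖∑ i ∈ s, l i • e i‖ ^ 2 :=
    inner_self_eq_norm_sq _
  rw [h] at h2
  rw [← h2, map_sum]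
  apply Finset.sum_congr rfl
  intro i _
  rw [RCLike.conj_mul]
  norm_cast

lemma inner_pproj (f u : H) :
    ⟪f, pproj v N u⟫ = ∑ k ∈ Finset.range N, ⟪v k, u⟫ * ⟪f, v k⟫ := by
  unfold pproj
  rw [inner_sum]
  apply Finset.sum_congr rfl
  intro k _
  rw [inner_smul_right]

lemma inner_pproj_mulVec (f : H) (j : Fin N) :
    ⟪f, pproj v N (w (j : ℕ))⟫
      = (Mmat v w N).mulVec (fun k : Fin N => ⟪f, v (k : ℕ)⟫) j := by
  rw [inner_pproj]
  rw [Matrix.mulVec, dotProduct]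
  exact (Fin.sum_univ_eq_sum_range (fun k => ⟪v k, w (j:ℕ)⟫ * ⟪f, v k⟫) N).symm

lemma pproj_inner_v (hv : Orthonormal ℂ v) (u : H) {i : ℕ} (hi : N ≤ i) :
    ⟪pproj v N u, v i⟫ = 0 := by
  unfold pproj
  rw [sum_inner]
  apply Finset.sum_eq_zero
  intro k hk
  have hk' : k < N := Finset.mem_range.mp hk
  rw [inner_smul_left, hv.2 (by omega : k ≠ i), mul_zero]

lemma norm_comb (hv : Orthonormal ℂ v) (d : Euc N) :
    ‖∑ j : Fin N, d j • pproj v N (w (j : ℕ))‖ ^ 2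
      = ‖matCLM (Mmat v w N)ᴴ (conjVec d)‖ ^ 2 := by
  have hcomb : ∑ j : Fin N, d j • pproj v N (w (j : ℕ))
      = ∑ k : Fin N, ((Mmat v w N)ᵀ.mulVec d k) • v (k : ℕ) := by
    simp only [pproj_eq_sum_fin, Finset.smul_sum, smul_smul]
    rw [Finset.sum_comm]
    apply Finset.sum_congr rfl
    intro k _
    rw [Matrix.mulVec, dotProduct, Finset.sum_smul]
    apply Finset.sum_congr rfl
    intro j _
    rw [Matrix.transpose_apply, mul_comm ((Mmat v w N) j k) (d j)]
    rfl
  have h1 := on_norm_sum (hv.comp _ Fin.val_injective) Finset.univ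
    (fun k : Fin N => (Mmat v w N)ᵀ.mulVec d k)
  simp only [Function.comp_apply] at h1
  rw [hcomb, h1, euc_norm_sq]
  apply Finset.sum_congr rfl
  intro k _
  have hk : matCLM (Mmat v w N)ᴴ (conjVec d) k = conj ((Mmat v w N)ᵀ.mulVec d k) := by
    simp only [matCLM_apply, Matrix.mulVec, dotProduct, Matrix.conjTranspose_apply,
      Matrix.transpose_apply, map_sum, _root_.map_mul, conjVec_apply, starRingEnd_apply,
      star_star]
  rw [hk, RCLike.norm_conj]

lemma parseval (hv : Orthonormal ℂ v)
    (hv_top : (span ℂ (Set.range v)).topologicalClosure = ⊤) (f : H) :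
    HasSum (fun j => ‖⟪f, v j⟫‖ ^ 2) (‖f‖ ^ 2) := by
  have hsp : ⊤ ≤ (span ℂ (Set.range v)).topologicalClosure := le_of_eq hv_top.symm
  have h := ((HilbertBasis.mk hv hsp).hasSum_inner_mul_inner f f).mapL Complex.reCLM
  have hcoe := fun i : ℕ => congrFun (HilbertBasis.coe_mk hv hsp) i
  simp only [HilbertBasis.coe_mk, hcoe] at h
  have h2 : ∀ j : ℕ, Complex.reCLM (⟪f, v j⟫ * ⟪v j, f⟫) = ‖⟪f, v j⟫‖ ^ 2 := by
    intro j
    rw [show ⟪v j, f⟫ = conj ⟪f, v j⟫ from (inner_conj_symm (v j) f).symm, Complex.mul_conj]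
    simp [Complex.normSq_eq_norm_sq, ← Complex.ofReal_pow]
  have h3 : Complex.reCLM ⟪f, f⟫ = ‖f‖ ^ 2 := by
    have := inner_self_eq_norm_sq (𝕜 := ℂ) f
    simpa using this
  rw [show (fun j => Complex.reCLM (⟪f, v j⟫ * ⟪v j, f⟫)) = fun j => ‖⟪f, v j⟫‖ ^ 2
        from funext h2, h3] at h
  exact h

lemma sum_filter_lt {α : Type*} [AddCommMonoid α] (s : Finset ℕ) (g : ℕ → α) :
    ∑ j ∈ s.filter (fun j => j < N), g j
      = ∑ j : Fin N, (if (j : ℕ) ∈ s then g (j : ℕ) else 0) := by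
  rw [Fin.sum_univ_eq_sum_range (fun j => if j ∈ s then g j else 0) N, ← Finset.sum_filter]
  apply Finset.sum_congr _ (fun _ _ => rfl)
  ext j
  simp only [Finset.mem_filter, Finset.mem_range]
  tauto

end Stmt10Aux

set_option maxHeartbeats 2000000 in
open Stmt10Aux in
theorem statement10 (v w : ℕ → H) (hv : Orthonormal ℂ v)
    (hv_top : (span ℂ (Set.range v)).topologicalClosure = ⊤)
    (hw : ∀ j, ‖w j‖ = 1)
    (N : ℕ) (hN : 1 ≤ N)
    (hbasis : LinearIndependent ℂ (fun j : Fin N => pproj v N (w (j : ℕ))) ∧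
      span ℂ ((fun j => pproj v N (w j)) '' Set.Iio N) = span ℂ (v '' Set.Iio N)) :
    (∃ A B : ℝ, OptimalRieszConstants (BtNseq w v N) A B) ∧
    ∀ A B : ℝ, OptimalRieszConstants (BtNseq w v N) A B →
      IsLeast {x : ℝ | ∃ c : Fin N → ℂ, (∑ i, ‖c i‖ ^ 2) = 1 ∧
          x = ∑ i, ‖(Mmat v w N).mulVec c i‖ ^ 2} A ∧
      ∃ m : ℝ, IsGreatest {x : ℝ | ∃ c : Fin N → ℂ, (∑ i, ‖c i‖ ^ 2) = 1 ∧
          x = ∑ i, ‖(Mmat v w N).mulVec c i‖ ^ 2} m ∧ B = max 1 m := by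
  classical
  obtain ⟨hLI, -⟩ := hbasis
  -- invertibility of M = Mmat v w N
  have hrows : LinearIndependent ℂ (fun j : Fin N => Mmat v w N j) := by
    set Φ : (Fin N → ℂ) →ₗ[ℂ] H :=
      { toFun := fun d => ∑ k : Fin N, d k • v (k : ℕ)
        map_add' := fun x y => by simp [add_smul, Finset.sum_add_distrib]
        map_smul' := fun r x => by simp [smul_smul, Finset.smul_sum] } with hPhi
    refine LinearIndependent.of_comp Φ ?_
    have hcomp : (Φ ∘ fun j : Fin N => Mmat v w N j)
        = fun j : Fin N => pproj v N (w (j : ℕ)) := by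
      funext j
      show ∑ k : Fin N, Mmat v w N j k • v (k : ℕ) = _
      rw [pproj_eq_sum_fin]
      rfl
    rw [hcomp]
    exact hLI
  have hU : IsUnit (Mmat v w N) := Matrix.linearIndependent_rows_iff_isUnit.mp hrows
  have hdet : IsUnit (Mmat v w N).det := (Matrix.isUnit_iff_isUnit_det _).mp hU
  have hMM : Mmat v w N * (Mmat v w N)⁻¹ = 1 := Matrix.mul_nonsing_inv _ hdet
  have hMM' : (Mmat v w N)⁻¹ * Mmat v w N = 1 := Matrix.nonsing_inv_mul _ hdet
  set T : Euc N →L[ℂ] Euc N := matCLM (Mmat v w N) with hTdef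
  set Y : Euc N →L[ℂ] Euc N := matCLM (Mmat v w N)⁻¹ with hYdef
  have hTY : ∀ z, T (Y z) = z := matCLM_comp_eq_id hMM
  have hYT : ∀ z, Y (T z) = z := matCLM_comp_eq_id hMM'
  set Aval : ℝ := (‖Y‖ ^ 2)⁻¹ with hAvaldef
  set mval : ℝ := ‖T‖ ^ 2 with hmvaldef
  have hLeastT : IsLeast (sqSet T) Aval := sqSet_isLeast hN T Y hTY hYT
  have hGreatT : IsGreatest (sqSet T) mval := sqSet_isGreatest hN T
  set T' : Euc N →L[ℂ] Euc N := matCLM (Matrix.conjTranspose (Mmat v w N)) with hT'def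
  set Y' : Euc N →L[ℂ] Euc N := matCLM (Matrix.conjTranspose (Mmat v w N)⁻¹) with hY'def
  have hT'Y' : ∀ z, T' (Y' z) = z := matCLM_comp_eq_id
    (by rw [← Matrix.conjTranspose_mul, hMM', Matrix.conjTranspose_one])
  have hY'T' : ∀ z, Y' (T' z) = z := matCLM_comp_eq_id
    (by rw [← Matrix.conjTranspose_mul, hMM, Matrix.conjTranspose_one])
  have hnT' : ‖T'‖ = ‖T‖ := norm_matCLM_adjoint _
  have hnY' : ‖Y'‖ = ‖Y‖ := norm_matCLM_adjoint _
  have hLeastT' : IsLeast (sqSet T') Aval := by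
    have := sqSet_isLeast hN T' Y' hT'Y' hY'T'
    rwa [hnY'] at this
  have hGreatT' : IsGreatest (sqSet T') mval := by
    have := sqSet_isGreatest hN T'
    rwa [hnT'] at this
  -- positivity of Aval
  have hApos : 0 < Aval := by
    obtain ⟨c₀, hc₀, hAeq⟩ := hLeastT.1
    have hTc₀ : T c₀ ≠ 0 := by
      intro h0
      have h1 := hYT c₀
      rw [h0, map_zero] at h1
      rw [← h1, norm_zero] at hc₀
      exact one_ne_zero hc₀.symm
    rw [hAeq]
    have := norm_pos_iff.2 hTc₀
    positivity
  -- Aval ≤ 1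
  have hA1 : Aval ≤ 1 := by
    set e₀ : Euc N := EuclideanSpace.single (⟨0, hN⟩ : Fin N) (1 : ℂ) with he₀def
    have he₀ : ‖e₀‖ = 1 := by simp [he₀def, EuclideanSpace.norm_single]
    have hmem : ‖T' e₀‖ ^ 2 ∈ sqSet T' := ⟨e₀, he₀, rfl⟩
    have hcol : ∀ k : Fin N, T' e₀ k = conj ⟪v (k : ℕ), w ((⟨0, hN⟩ : Fin N) : ℕ)⟫ := by
      intro k
      show (Matrix.conjTranspose (Mmat v w N)).mulVec e₀ k = _
      rw [Matrix.mulVec, dotProduct]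
      rw [Finset.sum_eq_single (⟨0, hN⟩ : Fin N)]
      · rw [he₀def, Matrix.conjTranspose_apply]
        simp [EuclideanSpace.single_apply]
        exact inner_conj_symm _ _
      · intro b _ hb
        rw [he₀def]
        simp [EuclideanSpace.single_apply, hb]
      · intro hnot
        exact absurd (Finset.mem_univ _) hnot
    have h1 : ‖T' e₀‖ ^ 2 ≤ 1 := by
      rw [euc_norm_sq]
      have h2 : ∑ k : Fin N, ‖T' e₀ k‖ ^ 2
          = ∑ k ∈ Finset.range N, ‖⟪v k, w 0⟫‖ ^ 2 := by
        rw [← Fin.sum_univ_eq_sum_range (fun k => ‖⟪v k, w 0⟫‖ ^ 2) N]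
        apply Finset.sum_congr rfl
        intro k _
        rw [hcol k, RCLike.norm_conj]
      rw [h2]
      calc ∑ k ∈ Finset.range N, ‖⟪v k, w 0⟫‖ ^ 2 ≤ ‖w 0‖ ^ 2 := hv.sum_inner_products_le _
      _ = 1 := by rw [hw 0, one_pow]
    exact le_trans (hLeastT'.2 hmem) h1
  have hAB : Aval ≤ max 1 mval := le_trans hA1 (le_max_left _ _)
  -- frame decomposition
  set af : H → Euc N := fun f => (WithLp.equiv 2 _).symm (fun k : Fin N => ⟪f, v (k : ℕ)⟫)
    with hafdef
  set tf : H → ℝ := fun f => ∑' (x : {x : ℕ // x ∉ Finset.range N}), ‖⟪f, v (x : ℕ)⟫‖ ^ 2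
    with htfdef
  have htf0 : ∀ f, 0 ≤ tf f := fun f => tsum_nonneg (fun x => by positivity)
  have hPar : ∀ f : H, HasSum (fun j => ‖⟪f, v j⟫‖ ^ 2) (‖f‖ ^ 2) := parseval v hv hv_top
  have hFin : Finite ((↑(Finset.range N) : Set ℕ)) := (Finset.range N).finite_toSet.to_subtype
  have hFsumm : ∀ f : H, Summable (fun j => ‖⟪f, BtNseq w v N j⟫‖ ^ 2) := by
    intro f
    refine (summable_subtype_and_compl
      (s := (↑(Finset.range N) : Set ℕ))).mp ⟨Summable.of_finite, ?_⟩
    refine (((hPar f).summable.subtype _)).congr (fun x => ?_)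
    have hx : ¬ ((x : ℕ) < N) := by
      have := x.2
      simpa [Finset.mem_range] using this
    show ‖⟪f, v (x : ℕ)⟫‖ ^ 2 = ‖⟪f, BtNseq w v N (x : ℕ)⟫‖ ^ 2
    rw [show BtNseq w v N (x : ℕ) = v (x : ℕ) from if_neg hx]
  have hdec : ∀ f : H, (∑' j, ‖⟪f, BtNseq w v N j⟫‖ ^ 2) = ‖T (af f)‖ ^ 2 + tf f := by
    intro f
    rw [← (hFsumm f).sum_add_tsum_subtype_compl (Finset.range N)]
    congr 1
    · rw [euc_norm_sq, ← Fin.sum_univ_eq_sum_range (fun j => ‖⟪f, BtNseq w v N j⟫‖ ^ 2) N]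
      apply Finset.sum_congr rfl
      intro j _
      rw [show BtNseq w v N (j : ℕ) = pproj v N (w (j : ℕ)) from if_pos j.isLt,
        inner_pproj_mulVec v w f j]
      rfl
    · apply tsum_congr
      intro x
      rw [show BtNseq w v N (x : ℕ) = v (x : ℕ) from
        if_neg (by simpa [Finset.mem_range] using x.2)]
  have hnormdec : ∀ f : H, ‖f‖ ^ 2 = ‖af f‖ ^ 2 + tf f := by
    intro f
    have hsplit := (hPar f).summable.sum_add_tsum_subtype_compl (Finset.range N)
    rw [(hPar f).tsum_eq] at hsplit
    rw [← hsplit]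
    congr 1
    rw [euc_norm_sq, ← Fin.sum_univ_eq_sum_range (fun j => ‖⟪f, v j⟫‖ ^ 2) N]
    apply Finset.sum_congr rfl
    intro j _
    rfl
  -- frame property
  have hFrame : IsFrame (BtNseq w v N) Aval (max 1 mval) := by
    refine ⟨hApos, hAB, fun f => ⟨hFsumm f, ?_, ?_⟩⟩
    · rw [hdec f, hnormdec f]
      have h1 := isLeast_homog hLeastT (af f)
      have h2 := htf0 f
      nlinarith [hA1]
    · rw [hdec f, hnormdec f]
      have h1 := isGreatest_homog hGreatT (af f)
      have h2 := htf0 f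
      have h3 : mval ≤ max 1 mval := le_max_right _ _
      have h4 : (1:ℝ) ≤ max 1 mval := le_max_left _ _
      have h5 : (0:ℝ) ≤ ‖af f‖ ^ 2 := by positivity
      nlinarith
  -- Riesz sequence property
  have hRieszIneq : ∀ (s : Finset ℕ) (c : ℕ → ℂ),
      Aval * ∑ j ∈ s, ‖c j‖ ^ 2 ≤ ‖∑ j ∈ s, c j • BtNseq w v N j‖ ^ 2 ∧
      ‖∑ j ∈ s, c j • BtNseq w v N j‖ ^ 2 ≤ (max 1 mval) * ∑ j ∈ s, ‖c j‖ ^ 2 := by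
    intro s c
    set c' : Euc N := (WithLp.equiv 2 _).symm (fun j : Fin N => if (j : ℕ) ∈ s then c j else 0)
      with hc'def
    have hcc : ∀ j : Fin N, c' j = if (j : ℕ) ∈ s then c (j : ℕ) else 0 := fun j => rfl
    have hsplit : ∑ j ∈ s, c j • BtNseq w v N j
        = (∑ j : Fin N, c' j • pproj v N (w (j : ℕ)))
          + ∑ j ∈ s.filter (fun j => ¬ j < N), c j • v j := by
      rw [← Finset.sum_filter_add_sum_filter_not s (fun j => j < N)]
      congr 1
      · rw [sum_filter_lt (N := N) s (fun j => c j • BtNseq w v N j)]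
        apply Finset.sum_congr rfl
        intro j _
        rw [hcc j]
        by_cases hj : (j : ℕ) ∈ s
        · rw [if_pos hj, if_pos hj,
            show BtNseq w v N (j : ℕ) = pproj v N (w (j : ℕ)) from if_pos j.isLt]
        · rw [if_neg hj, if_neg hj, zero_smul]
      · apply Finset.sum_congr rfl
        intro j hj
        rw [show BtNseq w v N j = v j from if_neg (Finset.mem_filter.mp hj).2]
    have horth : ⟪∑ j : Fin N, c' j • pproj v N (w (j : ℕ)),
        ∑ j ∈ s.filter (fun j => ¬ j < N), c j • v j⟫ = 0 := by
      rw [sum_inner]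
      apply Finset.sum_eq_zero
      intro k _
      rw [inner_smul_left, inner_sum]
      rw [Finset.sum_eq_zero, mul_zero]
      intro j hj
      have hjN : N ≤ j := by
        have := (Finset.mem_filter.mp hj).2
        omega
      rw [inner_smul_right, pproj_inner_v v hv _ hjN, mul_zero]
    have hns : ‖(∑ j : Fin N, c' j • pproj v N (w (j : ℕ)))
          + ∑ j ∈ s.filter (fun j => ¬ j < N), c j • v j‖ ^ 2
        = ‖∑ j : Fin N, c' j • pproj v N (w (j : ℕ))‖ ^ 2
          + ‖∑ j ∈ s.filter (fun j => ¬ j < N), c j • v j‖ ^ 2 := by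
      rw [pow_two, pow_two, pow_two]
      exact norm_add_sq_eq_norm_sq_add_norm_sq_of_inner_eq_zero _ _ horth
    have hP1 := norm_comb v w hv c'
    have hP2 := on_norm_sum hv (s.filter (fun j => ¬ j < N)) c
    have hcoef : ∑ j ∈ s, ‖c j‖ ^ 2
        = (∑ j : Fin N, ‖c' j‖ ^ 2) + ∑ j ∈ s.filter (fun j => ¬ j < N), ‖c j‖ ^ 2 := by
      rw [← Finset.sum_filter_add_sum_filter_not s (fun j => j < N)]
      congr 1
      rw [sum_filter_lt (N := N) s (fun j => ‖c j‖ ^ 2)]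
      apply Finset.sum_congr rfl
      intro j _
      rw [hcc j]
      by_cases hj : (j : ℕ) ∈ s
      · rw [if_pos hj, if_pos hj]
      · rw [if_neg hj, if_neg hj, norm_zero]
        norm_num
    have hlow := isLeast_homog hLeastT' (conjVec c')
    have hup := isGreatest_homog hGreatT' (conjVec c')
    have hcv : ‖conjVec c'‖ ^ 2 = ∑ j : Fin N, ‖c' j‖ ^ 2 := by
      rw [norm_conjVec, euc_norm_sq]
    have hrest0 : 0 ≤ ∑ j ∈ s.filter (fun j => ¬ j < N), ‖c j‖ ^ 2 :=
      Finset.sum_nonneg (fun j _ => by positivity)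
    have h3 : mval ≤ max 1 mval := le_max_right _ _
    have h4 : (1:ℝ) ≤ max 1 mval := le_max_left _ _
    have hc'0 : 0 ≤ ∑ j : Fin N, ‖c' j‖ ^ 2 :=
      Finset.sum_nonneg (fun j _ => by positivity)
    rw [hcv] at hlow hup
    constructor
    · rw [hsplit, hns, hP1, hP2, hcoef]
      nlinarith
    · rw [hsplit, hns, hP1, hP2, hcoef]
      nlinarith
  have hRB : IsRieszBasis (BtNseq w v N) Aval (max 1 mval) :=
    ⟨hFrame, hApos, hAB, hRieszIneq⟩
  -- optimality
  have hOptAux : ∀ A' B' : ℝ, IsRieszBasis (BtNseq w v N) A' B' →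
      A' ≤ Aval ∧ max 1 mval ≤ B' := by
    intro A' B' h'
    have hRz := h'.2.2.2
    have key : ∀ d : Euc N, ‖d‖ = 1 → A' ≤ ‖T' d‖ ^ 2 ∧ ‖T' d‖ ^ 2 ≤ B' := by
      intro d hd
      set c : ℕ → ℂ := fun j => if h : j < N then conj (d ⟨j, h⟩) else 0 with hcdef
      have h1 := hRz (Finset.range N) c
      have hsum_eq : ∑ j ∈ Finset.range N, c j • BtNseq w v N j
          = ∑ j : Fin N, (conjVec d) j • pproj v N (w (j : ℕ)) := by
        rw [← Fin.sum_univ_eq_sum_range (fun j => c j • BtNseq w v N j) N]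
        apply Finset.sum_congr rfl
        intro j _
        rw [show c (j : ℕ) = conj (d j) from by
          rw [hcdef]; simp only [dif_pos j.isLt, Fin.eta]]
        rw [show BtNseq w v N (j : ℕ) = pproj v N (w (j : ℕ)) from if_pos j.isLt]
        rfl
      have hnorm_eq : ‖∑ j ∈ Finset.range N, c j • BtNseq w v N j‖ ^ 2 = ‖T' d‖ ^ 2 := by
        rw [hsum_eq, norm_comb v w hv (conjVec d), conjVec_conjVec]
      have hcoefsum : ∑ j ∈ Finset.range N, ‖c j‖ ^ 2 = 1 := by
        rw [← Fin.sum_univ_eq_sum_range (fun j => ‖c j‖ ^ 2) N]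
        have : ∑ j : Fin N, ‖c (j : ℕ)‖ ^ 2 = ∑ j : Fin N, ‖d j‖ ^ 2 := by
          apply Finset.sum_congr rfl
          intro j _
          rw [show c (j : ℕ) = conj (d j) from by
            rw [hcdef]; simp only [dif_pos j.isLt, Fin.eta]]
          rw [RCLike.norm_conj]
        rw [this, ← euc_norm_sq, hd, one_pow]
      constructor
      · have := h1.1
        rwa [hcoefsum, mul_one, hnorm_eq] at this
      · have := h1.2
        rwa [hcoefsum, mul_one, hnorm_eq] at this
    constructor
    · obtain ⟨d, hd, hAe⟩ := hLeastT'.1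
      have := (key d hd).1
      rw [← hAe] at this
      exact this
    · rw [max_le_iff]
      constructor
      · have h1 := (hRz {N} (fun _ => (1 : ℂ))).2
        have hseq : ∑ j ∈ ({N} : Finset ℕ), (1 : ℂ) • BtNseq w v N j = v N := by
          rw [Finset.sum_singleton, one_smul,
            show BtNseq w v N N = v N from if_neg (lt_irrefl N)]
        have hcs : ∑ j ∈ ({N} : Finset ℕ), ‖(1 : ℂ)‖ ^ 2 = 1 := by simp
        rw [hseq, hcs, mul_one] at h1
        have hvN : ‖v N‖ = 1 := hv.1 N
        rw [hvN, one_pow] at h1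
        exact h1
      · obtain ⟨d, hd, hme⟩ := hGreatT'.1
        have := (key d hd).2
        rw [← hme] at this
        exact this
  have hOpt : OptimalRieszConstants (BtNseq w v N) Aval (max 1 mval) := ⟨hRB, hOptAux⟩
  have hSeq : {x : ℝ | ∃ c : Fin N → ℂ, (∑ i, ‖c i‖ ^ 2) = 1 ∧
      x = ∑ i, ‖(Mmat v w N).mulVec c i‖ ^ 2} = sqSet T := by
    ext x
    constructor
    · rintro ⟨c, hc1, rfl⟩
      refine ⟨(WithLp.equiv 2 _).symm c, ?_, ?_⟩
      · have hsq : ‖(WithLp.equiv 2 (Fin N → ℂ)).symm c‖ ^ 2 = 1 := by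
          rw [euc_norm_sq]
          exact hc1
        rw [← Real.sqrt_sq (norm_nonneg _), hsq, Real.sqrt_one]
      · rw [euc_norm_sq]
        rfl
    · rintro ⟨c, hc, rfl⟩
      refine ⟨fun i => c i, ?_, ?_⟩
      · have : (∑ i, ‖c i‖ ^ 2) = 1 := by
          rw [← euc_norm_sq, hc, one_pow]
        exact this
      · rw [euc_norm_sq]
        rfl
  refine ⟨⟨Aval, max 1 mval, hOpt⟩, ?_⟩
  intro A B hABopt
  have h1 := hABopt.2 Aval (max 1 mval) hRB
  have h2 := hOptAux A B hABopt.1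
  have hAeq : A = Aval := le_antisymm h2.1 h1.1
  have hBeq : B = max 1 mval := le_antisymm h1.2 h2.2
  constructor
  · rw [hSeq, hAeq]
    exact hLeastT
  · exact ⟨mval, by rw [hSeq]; exact hGreatT, by rw [hBeq]⟩


end
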